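/- Let A be an n-dimensional complex Leibniz algebra of nilindex n + 1, i.e. A^n ≠ 0 and A^{n+1} = 0. Then there exists a basis e₁, …, e_n of A such that [e_i, e₁] = e_{i+1} for 1 ≤ i ≤ n−1 and all other products of basis elements are zero (in particular [e_i, e_j] = 0 whenever j ≥ 2, and [e_n, e₁] = 0). -/

import Mathlib

/-- A complex Leibniz algebra structure on a vector space `V`: a bilinear bracket
satisfying the Leibniz identity `[x,[y,z]] = [[x,y],z] − [[x,z],y]`. -/
structure LeibnizAlg (V : Type*) [AddCommGroup V] [Module ℂ V] where
  br : V →ₗ[ℂ] V →ₗ[ℂ] V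
  leibniz : ∀ x y z : V, br x (br y z) = br (br x y) z - br (br x z) y

namespace LeibnizAlg

variable {V : Type*} [AddCommGroup V] [Module ℂ V]

/-- The span of all products `[u,v]` with `u ∈ S`, `v ∈ T`. -/
def prodSpan (A : LeibnizAlg V) (S T : Submodule ℂ V) : Submodule ℂ V :=
  Submodule.span ℂ {z : V | ∃ u ∈ S, ∃ v ∈ T, z = A.br u v}

/-- `A.lcs k` is the `(k+1)`-st term `A^{k+1}` of the descending central series:
`A¹ = A`, `A^{k+1} = [A^k, A]`. -/
def lcs (A : LeibnizAlg V) : ℕ → Submodule ℂ V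
  | 0 => ⊤
  | k + 1 => A.prodSpan (lcs A k) ⊤

end LeibnizAlg

namespace LeibnizAlg

variable {V : Type*} [AddCommGroup V] [Module ℂ V]

lemma br_mem_prodSpan (A : LeibnizAlg V) {S T : Submodule ℂ V} {u v : V}
    (hu : u ∈ S) (hv : v ∈ T) : A.br u v ∈ A.prodSpan S T :=
  Submodule.subset_span ⟨u, hu, v, hv, rfl⟩

lemma prodSpan_le (A : LeibnizAlg V) {S T U : Submodule ℂ V}
    (h : ∀ u ∈ S, ∀ v ∈ T, A.br u v ∈ U) : A.prodSpan S T ≤ U := by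
  apply Submodule.span_le.mpr
  rintro z ⟨u, hu, v, hv, rfl⟩
  exact h u hu v hv

lemma prodSpan_mono (A : LeibnizAlg V) {S S' T T' : Submodule ℂ V}
    (hS : S ≤ S') (hT : T ≤ T') : A.prodSpan S T ≤ A.prodSpan S' T' :=
  A.prodSpan_le fun u hu v hv => A.br_mem_prodSpan (hS hu) (hT hv)

@[simp] lemma lcs_zero (A : LeibnizAlg V) : A.lcs 0 = ⊤ := rfl

lemma lcs_succ (A : LeibnizAlg V) (k : ℕ) : A.lcs (k + 1) = A.prodSpan (A.lcs k) ⊤ := rfl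

lemma lcs_succ_le (A : LeibnizAlg V) : ∀ k, A.lcs (k + 1) ≤ A.lcs k
  | 0 => le_top
  | k + 1 => A.prodSpan_mono (lcs_succ_le A k) le_rfl

lemma lcs_antitone (A : LeibnizAlg V) : Antitone A.lcs :=
  antitone_nat_of_succ_le A.lcs_succ_le

/-- `[A^{k+1}, A^2] ⊆ A^{k+3}`, i.e. `br x v ∈ lcs (k+2)` for `x ∈ lcs k`, `v ∈ lcs 1`. -/
lemma br_mem_of_mem_lcs_one (A : LeibnizAlg V) {k : ℕ} {x v : V}
    (hx : x ∈ A.lcs k) (hv : v ∈ A.lcs 1) : A.br x v ∈ A.lcs (k + 2) := by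
  have hle : A.lcs 1 ≤ (A.lcs (k + 2)).comap (A.br x) := by
    rw [lcs_succ, lcs_zero]
    apply A.prodSpan_le
    intro y _ z _
    simp only [Submodule.mem_comap]
    rw [A.leibniz x y z]
    have h1 : A.br x y ∈ A.lcs (k + 1) := A.br_mem_prodSpan hx Submodule.mem_top
    have h2 : A.br x z ∈ A.lcs (k + 1) := A.br_mem_prodSpan hx Submodule.mem_top
    exact sub_mem (A.br_mem_prodSpan h1 Submodule.mem_top)
      (A.br_mem_prodSpan h2 Submodule.mem_top)
  exact hle hv

lemma lcs_stabilize (A : LeibnizAlg V) {k : ℕ} (h : A.lcs (k + 1) = A.lcs k) :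
    ∀ m, k ≤ m → A.lcs m = A.lcs k := by
  intro m hm
  induction m, hm using Nat.le_induction with
  | base => rfl
  | succ m hm ih => rw [lcs_succ, ih, ← lcs_succ, h]

/-- The iterated right-multiplication sequence: `seq A x 0 = x`, `seq A x (k+1) = [seq k, x]`. -/
def seq (A : LeibnizAlg V) (x : V) : ℕ → V
  | 0 => x
  | k + 1 => A.br (seq A x k) x

@[simp] lemma seq_zero (A : LeibnizAlg V) (x : V) : A.seq x 0 = x := rfl

@[simp] lemma seq_succ (A : LeibnizAlg V) (x : V) (k : ℕ) :
    A.seq x (k + 1) = A.br (A.seq x k) x := rfl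

lemma br_seq_eq_zero (A : LeibnizAlg V) (x : V) : ∀ j, ∀ y : V, A.br y (A.seq x (j + 1)) = 0 := by
  intro j
  induction j with
  | zero =>
    intro y
    rw [seq_succ, seq_zero, A.leibniz, sub_self]
  | succ j ih =>
    intro y
    rw [seq_succ, A.leibniz, ih y, ih (A.br y x), map_zero, LinearMap.zero_apply, sub_zero]

end LeibnizAlg

open LeibnizAlg

/-- An `n`-dimensional complex Leibniz algebra of nilindex `n + 1`
(`A^n ≠ 0`, `A^{n+1} = 0`) has a basis `e₁,…,e_n` with `[e_i,e₁] = e_{i+1}`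
(`1 ≤ i ≤ n−1`) and all other products of basis vectors zero.
(Here `A.lcs k = A^{k+1}`; the basis is 0-indexed.) -/
theorem statement7 {V : Type*} [AddCommGroup V] [Module ℂ V] [FiniteDimensional ℂ V]
    (A : LeibnizAlg V) (n : ℕ)
    (hn : Module.finrank ℂ V = n)
    (h1 : A.lcs (n - 1) ≠ ⊥) (h2 : A.lcs n = ⊥) :
    ∃ e : Module.Basis (Fin n) ℂ V, ∀ i j : Fin n,
      A.br (e i) (e j) =
        if h : j.val = 0 ∧ i.val + 1 < n then e ⟨i.val + 1, h.2⟩ else 0 := by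
  -- n is positive
  have hnpos : 0 < n := by
    rcases Nat.eq_zero_or_pos n with h0 | h
    · exfalso
      rw [h0] at hn
      have : Subsingleton V := Module.finrank_zero_iff.mp hn
      exact h1 (Subsingleton.elim _ _)
    · exact h
  -- the series is strictly decreasing for k < n
  have hstrict : ∀ k < n, A.lcs (k + 1) < A.lcs k := by
    intro k hk
    refine lt_of_le_of_ne (A.lcs_succ_le k) ?_
    intro heq
    have hk1 : k ≤ n - 1 := Nat.le_pred_of_lt hk
    have e1 : A.lcs (n - 1) = A.lcs k := A.lcs_stabilize heq _ hk1
    have e2 : A.lcs n = A.lcs k := A.lcs_stabilize heq _ (le_of_lt hk)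
    exact h1 (by rw [e1, ← e2, h2])
  -- dimension counts
  have hub : ∀ k ≤ n, Module.finrank ℂ (A.lcs k) ≤ n - k := by
    intro k hk
    induction k with
    | zero => exact (Submodule.finrank_le _).trans (by omega)
    | succ k ih =>
      have h1' : Module.finrank ℂ (A.lcs (k + 1)) < Module.finrank ℂ (A.lcs k) :=
        Submodule.finrank_lt_finrank_of_lt (hstrict k (Nat.lt_of_succ_le hk))
      have := ih (Nat.le_of_succ_le hk)
      omega
  have hlb : ∀ j ≤ n, j ≤ Module.finrank ℂ (A.lcs (n - j)) := by
    intro j hj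
    induction j with
    | zero => exact Nat.zero_le _
    | succ j ih =>
      have hnm : n - (j + 1) + 1 = n - j := by omega
      have hlt : n - (j + 1) < n := by omega
      have hs : Module.finrank ℂ (A.lcs (n - (j + 1) + 1)) <
          Module.finrank ℂ (A.lcs (n - (j + 1))) :=
        Submodule.finrank_lt_finrank_of_lt (hstrict _ hlt)
      rw [hnm] at hs
      have := ih (Nat.le_of_succ_le hj)
      omega
  have hf1 : Module.finrank ℂ (A.lcs 1) = n - 1 := by
    have h1' := hub 1 hnpos
    have h2' := hlb (n - 1) (Nat.sub_le _ _)
    rw [show n - (n - 1) = 1 by omega] at h2'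
    omega
  -- choose e₀ outside lcs 1
  have hlt : A.lcs 1 < ⊤ := by
    have := hstrict 0 hnpos
    rwa [A.lcs_zero] at this
  obtain ⟨e₀, -, he₀⟩ := SetLike.exists_of_lt hlt
  set e : ℕ → V := A.seq e₀ with he_def
  -- span{e₀} ⊔ lcs 1 = ⊤
  have htop0 : Submodule.span ℂ {e₀} ⊔ A.lcs 1 = ⊤ := by
    have hlt2 : A.lcs 1 < Submodule.span ℂ {e₀} ⊔ A.lcs 1 := by
      refine lt_of_le_of_ne le_sup_right ?_
      intro heq
      exact he₀ (heq ▸ Submodule.mem_sup_left (Submodule.mem_span_singleton_self e₀))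
    have hge : n ≤ Module.finrank ℂ ↥(Submodule.span ℂ {e₀} ⊔ A.lcs 1) := by
      have := Submodule.finrank_lt_finrank_of_lt hlt2
      omega
    apply Submodule.eq_top_of_finrank_eq
    have hle := Submodule.finrank_le (Submodule.span ℂ {e₀} ⊔ A.lcs 1)
    omega
  -- e k ∈ lcs k
  have he_mem : ∀ k, e k ∈ A.lcs k := by
    intro k
    induction k with
    | zero => exact Submodule.mem_top
    | succ k ih => exact A.br_mem_prodSpan ih Submodule.mem_top
  -- the key filtration identity
  have key : ∀ k, A.lcs k = Submodule.span ℂ {e k} ⊔ A.lcs (k + 1) := by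
    intro k
    induction k with
    | zero => rw [A.lcs_zero, ← htop0]; rfl
    | succ k ih =>
      apply le_antisymm
      · rw [A.lcs_succ k]
        apply A.prodSpan_le
        intro u hu v _
        rw [ih] at hu
        obtain ⟨a, ha, u', hu', rfl⟩ := Submodule.mem_sup.mp hu
        obtain ⟨c, rfl⟩ := Submodule.mem_span_singleton.mp ha
        have hv : v ∈ Submodule.span ℂ {e₀} ⊔ A.lcs 1 := htop0.ge Submodule.mem_top
        obtain ⟨b, hb, v', hv', rfl⟩ := Submodule.mem_sup.mp hv
        obtain ⟨d, rfl⟩ := Submodule.mem_span_singleton.mp hb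
        have m1 : A.br (e k) e₀ ∈ Submodule.span ℂ {e (k + 1)} ⊔ A.lcs (k + 2) := by
          have : A.br (e k) e₀ = e (k + 1) := rfl
          rw [this]
          exact Submodule.mem_sup_left (Submodule.mem_span_singleton_self _)
        have m2 : A.br (e k) v' ∈ Submodule.span ℂ {e (k + 1)} ⊔ A.lcs (k + 2) :=
          Submodule.mem_sup_right (A.br_mem_of_mem_lcs_one (he_mem k) hv')
        have m3 : A.br u' e₀ ∈ Submodule.span ℂ {e (k + 1)} ⊔ A.lcs (k + 2) :=
          Submodule.mem_sup_right (A.br_mem_prodSpan hu' Submodule.mem_top)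
        have m4 : A.br u' v' ∈ Submodule.span ℂ {e (k + 1)} ⊔ A.lcs (k + 2) :=
          Submodule.mem_sup_right (A.br_mem_prodSpan hu' Submodule.mem_top)
        have expand : A.br (c • e k + u') (d • e₀ + v') =
            d • (c • A.br (e k) e₀ + A.br u' e₀) + (c • A.br (e k) v' + A.br u' v') := by
          simp only [map_add, map_smul, LinearMap.add_apply, LinearMap.smul_apply]
        rw [expand]
        exact add_mem (Submodule.smul_mem _ _ (add_mem (Submodule.smul_mem _ _ m1) m3))
          (add_mem (Submodule.smul_mem _ _ m2) m4)
      · apply sup_le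
        · rw [Submodule.span_le, Set.singleton_subset_iff]
          exact A.br_mem_prodSpan (he_mem k) Submodule.mem_top
        · exact A.lcs_succ_le (k + 1)
  -- the e i for i < n span V
  have hspan : ∀ j ≤ n, A.lcs (n - j) ≤
      Submodule.span ℂ (Set.range fun i : Fin n => e i.val) := by
    intro j hj
    induction j with
    | zero => rw [Nat.sub_zero, h2]; exact bot_le
    | succ j ih =>
      have hnm : n - (j + 1) + 1 = n - j := by omega
      rw [key (n - (j + 1)), hnm]
      apply sup_le
      · rw [Submodule.span_le, Set.singleton_subset_iff]
        apply Submodule.subset_span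
        exact ⟨⟨n - (j + 1), by omega⟩, rfl⟩
      · exact ih (Nat.le_of_succ_le hj)
  have htople : (⊤ : Submodule ℂ V) ≤
      Submodule.span ℂ (Set.range fun i : Fin n => e i.val) := by
    have := hspan n le_rfl
    rwa [Nat.sub_self, A.lcs_zero] at this
  have hcard : Fintype.card (Fin n) = Module.finrank ℂ V := by simp [hn]
  refine ⟨basisOfTopLeSpanOfCardEqFinrank (fun i : Fin n => e i.val) htople hcard, ?_⟩
  intro i j
  rw [coe_basisOfTopLeSpanOfCardEqFinrank]
  have hen : e n = 0 := by
    have := he_mem n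
    rwa [h2, Submodule.mem_bot] at this
  split_ifs with h
  · obtain ⟨hj0, hilt⟩ := h
    simp only [hj0]
    rfl
  · rcases Nat.eq_zero_or_pos j.val with hj0 | hjpos
    · have hin : i.val + 1 = n := by
        have := i.isLt
        omega
      simp only [hj0]
      have : A.br (e i.val) (e 0) = e (i.val + 1) := rfl
      rw [this, hin, hen]
    · obtain ⟨m, hm⟩ := Nat.exists_eq_add_of_lt hjpos
      rw [show j.val = m + 1 by omega]
      exact A.br_seq_eq_zero e₀ m _
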